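/- For every p ∈ [1,∞) one has sup over all ε ∈ (0,ε₀), all Δt = T/N with T ∈ (0,∞), N ∈ ℕ, and all n ∈ ℕ of (𝔼[|m_n^{ε,Δt}|^p])^{1/p} < ∞ (a finite bound depending only on p and sup_{ε∈(0,ε₀)}|m₀^ε|), and for every q ∈ (0,∞) one has sup over the same range of 𝔼[e^{q|m_n^{ε,Δt}|}] < ∞; in particular for p = 2 one has 𝔼[|m_n^{ε,Δt}|²] ≤ sup_{ε'∈(0,ε₀)}|m₀^{ε'}|² + 1/2. -/

import Mathlib

open MeasureTheory ProbabilityTheory Real Set Filter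
open scoped NNReal ENNReal

/-- Pathwise representation of the Ornstein--Uhlenbeck process
`m^ε(t) = e^{−t/ε²} m₀ + ε⁻¹ β(t) − ε⁻³ ∫₀ᵗ e^{−(t−s)/ε²} β(s) ds`. -/
noncomputable def mOU {Ω : Type*} (β : ℝ → Ω → ℝ) (ε m0 t : ℝ) (ω : Ω) : ℝ :=
  Real.exp (-(t / ε ^ 2)) * m0 + ε⁻¹ * β t ω
    - (ε ^ 3)⁻¹ * ∫ s in (0:ℝ)..t, Real.exp (-((t - s) / ε ^ 2)) * β s ω

/-- `ζ^ε(t) = ε⁻¹ ∫₀ᵗ m^ε(s) ds`. -/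
noncomputable def zetaOU {Ω : Type*} (β : ℝ → Ω → ℝ) (ε m0 t : ℝ) (ω : Ω) : ℝ :=
  ε⁻¹ * ∫ s in (0:ℝ)..t, mOU β ε m0 s ω

namespace DOUaux

lemma sq_le_exp_add_exp (t : ℝ) : t ^ 2 ≤ Real.exp t + Real.exp (-t) - 2 := by
  have hch : Real.exp t + Real.exp (-t) = 2 * Real.cosh t := by
    rw [Real.cosh_eq]; ring
  have h2 : Real.cosh t = 2 * Real.sinh (t / 2) ^ 2 + 1 := by
    have := Real.cosh_two_mul (t / 2)
    have h3 := Real.cosh_sq (t / 2)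
    rw [show 2 * (t / 2) = t by ring] at this
    rw [this, h3]; ring
  have hs : (t / 2) ^ 2 ≤ Real.sinh (t / 2) ^ 2 := by
    rcases le_total 0 (t / 2) with h | h
    · have := (Real.self_le_sinh_iff).2 h
      nlinarith
    · have h' : 0 ≤ -(t / 2) := by linarith
      have := (Real.self_le_sinh_iff).2 h'
      rw [Real.sinh_neg] at this
      nlinarith
  nlinarith

lemma exp_sub_one_le {u : ℝ} (hu : 0 ≤ u) : Real.exp u - 1 ≤ u * Real.exp u := by
  have h := Real.add_one_le_exp (-u)
  rw [Real.exp_neg] at h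
  have hp := Real.exp_pos u
  have : (1 - u) * Real.exp u ≤ 1 := by
    rw [← inv_mul_cancel₀ (ne_of_gt hp)] at *
    nlinarith
  nlinarith

lemma exp_abs_le (t : ℝ) : Real.exp |t| ≤ Real.exp t + Real.exp (-t) := by
  rcases le_total 0 t with h | h
  · rw [abs_of_nonneg h]; have := Real.exp_pos (-t); linarith
  · rw [abs_of_nonpos h]; have := Real.exp_pos t; linarith

lemma abs_le_exp_add_exp (x : ℝ) : |x| ≤ Real.exp x + Real.exp (-x) := by
  have h1 : |x| ≤ Real.exp |x| := by
    have := Real.add_one_le_exp |x|; linarith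
  exact h1.trans (exp_abs_le x)

lemma sq_le_two_mul_exp_add_exp (x : ℝ) : x ^ 2 ≤ Real.exp x + Real.exp (-x) := by
  have := sq_le_exp_add_exp x; linarith

section Gaussian

variable {v : ℝ≥0}

lemma gaussianReal_eq_withDensity (hv : v ≠ 0) :
    gaussianReal 0 v = MeasureTheory.volume.withDensity
      (fun x => ((Real.toNNReal (gaussianPDFReal 0 v x) : ℝ≥0) : ℝ≥0∞)) := by
  rw [gaussianReal_of_var_ne_zero 0 hv]
  rfl

lemma gauss_integral_eq (hv : v ≠ 0) (g : ℝ → ℝ) :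
    ∫ x, g x ∂(gaussianReal 0 v) = ∫ x, gaussianPDFReal 0 v x * g x := by
  rw [gaussianReal_eq_withDensity hv,
    integral_withDensity_eq_integral_smul
      ((measurable_gaussianPDFReal 0 v).real_toNNReal) g]
  congr 1 with x
  rw [NNReal.smul_def, Real.coe_toNNReal _ (gaussianPDFReal_nonneg 0 v x)]
  rfl

lemma gauss_integrable_iff (hv : v ≠ 0) (g : ℝ → ℝ) :
    Integrable g (gaussianReal 0 v) ↔
      Integrable (fun x => gaussianPDFReal 0 v x * g x) := by
  rw [gaussianReal_eq_withDensity hv,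
    integrable_withDensity_iff_integrable_smul
      ((measurable_gaussianPDFReal 0 v).real_toNNReal)]
  have hco : ∀ x, ((Real.toNNReal (gaussianPDFReal 0 v x) : ℝ≥0) : ℝ) • g x
      = gaussianPDFReal 0 v x * g x := by
    intro x
    rw [smul_eq_mul, Real.coe_toNNReal _ (gaussianPDFReal_nonneg 0 v x)]
  constructor <;> intro h
  · exact h.congr (Filter.Eventually.of_forall fun x => hco x)
  · exact h.congr (Filter.Eventually.of_forall fun x => (hco x).symm)

lemma gauss_pdf_identity (hv : v ≠ 0) (c x : ℝ) :
    gaussianPDFReal 0 v x * Real.exp (c * x)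
      = Real.exp (c ^ 2 * v / 2) * gaussianPDFReal (c * v) v x := by
  have hv0 : (0 : ℝ) < (v : ℝ) := by
    exact_mod_cast pos_iff_ne_zero.mpr hv
  simp only [gaussianPDFReal]
  rw [mul_assoc ((Real.sqrt (2 * π * (v:ℝ)))⁻¹), ← Real.exp_add,
    mul_comm (Real.exp (c ^ 2 * (v:ℝ) / 2)) _,
    mul_assoc ((Real.sqrt (2 * π * (v:ℝ)))⁻¹), ← Real.exp_add]
  congr 1
  field_simp
  ring

lemma gauss_mgf_integrable (hv : v ≠ 0) (c : ℝ) :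
    Integrable (fun x => Real.exp (c * x)) (gaussianReal 0 v) := by
  rw [gauss_integrable_iff hv]
  have : (fun x => gaussianPDFReal 0 v x * Real.exp (c * x))
      = fun x => Real.exp (c ^ 2 * v / 2) * gaussianPDFReal (c * v) v x := by
    funext x; exact gauss_pdf_identity hv c x
  rw [this]
  exact (integrable_gaussianPDFReal (c * v) v).const_mul _

lemma gauss_mgf (hv : v ≠ 0) (c : ℝ) :
    ∫ x, Real.exp (c * x) ∂(gaussianReal 0 v) = Real.exp (c ^ 2 * v / 2) := by
  rw [gauss_integral_eq hv]
  have : (fun x => gaussianPDFReal 0 v x * Real.exp (c * x))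
      = fun x => Real.exp (c ^ 2 * v / 2) * gaussianPDFReal (c * v) v x := by
    funext x; exact gauss_pdf_identity hv c x
  rw [this, integral_const_mul, integral_gaussianPDFReal_eq_one (c * v) hv, mul_one]

end Gaussian

section Map

variable {Ω : Type*} [MeasurableSpace Ω] {P : Measure Ω} [IsProbabilityMeasure P]
  {X : Ω → ℝ} {v : ℝ≥0}

lemma X_mgf_integrable (hX : Measurable X) (hmap : Measure.map X P = gaussianReal 0 v)
    (hv : v ≠ 0) (c : ℝ) : Integrable (fun ω => Real.exp (c * X ω)) P := by
  have h := gauss_mgf_integrable hv c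
  rw [← hmap] at h
  exact (integrable_map_measure
    ((measurable_id.const_mul c).exp.aestronglyMeasurable) hX.aemeasurable).mp h

lemma X_mgf (hX : Measurable X) (hmap : Measure.map X P = gaussianReal 0 v)
    (hv : v ≠ 0) (c : ℝ) : ∫ ω, Real.exp (c * X ω) ∂P = Real.exp (c ^ 2 * v / 2) := by
  have hg : AEStronglyMeasurable (fun x : ℝ => Real.exp (c * x)) (Measure.map X P) :=
    Measurable.aestronglyMeasurable (by fun_prop)
  rw [← gauss_mgf hv c, ← hmap, integral_map hX.aemeasurable hg]

lemma X_integrable (hX : Measurable X) (hmap : Measure.map X P = gaussianReal 0 v)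
    (hv : v ≠ 0) : Integrable X P := by
  refine Integrable.mono' ((X_mgf_integrable hX hmap hv 1).add (X_mgf_integrable hX hmap hv (-1)))
    hX.aestronglyMeasurable (Filter.Eventually.of_forall fun ω => ?_)
  have := abs_le_exp_add_exp (X ω)
  simpa [Real.norm_eq_abs] using this

lemma X_sq_integrable (hX : Measurable X) (hmap : Measure.map X P = gaussianReal 0 v)
    (hv : v ≠ 0) : Integrable (fun ω => (X ω) ^ 2) P := by
  refine Integrable.mono' ((X_mgf_integrable hX hmap hv 1).add (X_mgf_integrable hX hmap hv (-1)))
    (hX.pow_const 2).aestronglyMeasurable (Filter.Eventually.of_forall fun ω => ?_)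
  have := sq_le_two_mul_exp_add_exp (X ω)
  have h0 : (0:ℝ) ≤ (X ω) ^ 2 := sq_nonneg _
  simpa [Real.norm_eq_abs, abs_of_nonneg h0] using this

lemma X_mean (hX : Measurable X) (hmap : Measure.map X P = gaussianReal 0 v)
    (hv : v ≠ 0) : ∫ ω, X ω ∂P = 0 := by
  have hXi := X_integrable hX hmap hv
  have key : ∀ c : ℝ, 0 < c → |∫ ω, X ω ∂P| ≤ c * v / 2 * Real.exp (c ^ 2 * v / 2) := by
    intro c hc
    have hu : (0:ℝ) ≤ c ^ 2 * v / 2 := by positivity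
    have hmgfp := X_mgf hX hmap hv c
    have hmgfm := X_mgf hX hmap hv (-c)
    have hintp := X_mgf_integrable hX hmap hv c
    have hintm := X_mgf_integrable hX hmap hv (-c)
    have hb : Real.exp (c ^ 2 * v / 2) - 1 ≤ c ^ 2 * v / 2 * Real.exp (c ^ 2 * v / 2) :=
      exp_sub_one_le hu
    have hQp : Integrable (fun ω => (Real.exp (c * X ω) - 1) / c) P :=
      (hintp.sub (integrable_const 1)).div_const c
    have hQm : Integrable (fun ω => (Real.exp (-c * X ω) - 1) / c) P :=
      (hintm.sub (integrable_const 1)).div_const c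
    have hRp : ∫ ω, (Real.exp (c * X ω) - 1) / c ∂P = (Real.exp (c ^ 2 * v / 2) - 1) / c := by
      rw [integral_div, integral_sub hintp (integrable_const 1), integral_const,
        probReal_univ, smul_eq_mul, one_mul, hmgfp]
    have hRm : ∫ ω, (Real.exp (-c * X ω) - 1) / c ∂P = (Real.exp (c ^ 2 * v / 2) - 1) / c := by
      rw [integral_div, integral_sub hintm (integrable_const 1), integral_const,
        probReal_univ, smul_eq_mul, one_mul, hmgfm]
      norm_num
    have hend : (Real.exp (c ^ 2 * v / 2) - 1) / c ≤ c * v / 2 * Real.exp (c ^ 2 * v / 2) := by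
      rw [div_le_iff₀ hc]
      calc Real.exp (c ^ 2 * v / 2) - 1 ≤ c ^ 2 * v / 2 * Real.exp (c ^ 2 * v / 2) := hb
      _ = c * v / 2 * Real.exp (c ^ 2 * v / 2) * c := by ring
    have h1 : ∫ ω, X ω ∂P ≤ c * v / 2 * Real.exp (c ^ 2 * v / 2) := by
      have hle : ∀ ω, X ω ≤ (Real.exp (c * X ω) - 1) / c := by
        intro ω
        rw [le_div_iff₀ hc]
        have := Real.add_one_le_exp (c * X ω)
        nlinarith
      have hmono := integral_mono hXi hQp hle
      rw [hRp] at hmono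
      exact hmono.trans hend
    have h2 : -∫ ω, X ω ∂P ≤ c * v / 2 * Real.exp (c ^ 2 * v / 2) := by
      have hle : ∀ ω, -X ω ≤ (Real.exp (-c * X ω) - 1) / c := by
        intro ω
        rw [le_div_iff₀ hc]
        have := Real.add_one_le_exp (-c * X ω)
        nlinarith
      have hmono := integral_mono hXi.neg hQm hle
      rw [hRm] at hmono
      rw [← integral_neg]
      exact hmono.trans hend
    exact abs_le.mpr ⟨by linarith, h1⟩
  have htd : Filter.Tendsto (fun c : ℝ => c * (v:ℝ) / 2 * Real.exp (c ^ 2 * v / 2))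
      (nhdsWithin 0 (Set.Ioi 0)) (nhds 0) := by
    have hcont : Continuous (fun c : ℝ => c * (v:ℝ) / 2 * Real.exp (c ^ 2 * v / 2)) := by
      continuity
    have := tendsto_nhdsWithin_of_tendsto_nhds (s := Set.Ioi (0:ℝ)) (hcont.tendsto 0)
    simpa using this
  have habs : |∫ ω, X ω ∂P| ≤ 0 := by
    refine ge_of_tendsto htd ?_
    filter_upwards [self_mem_nhdsWithin] with c hc
    exact key c hc
  exact abs_eq_zero.mp (le_antisymm habs (abs_nonneg _))

lemma X_sq_le (hX : Measurable X) (hmap : Measure.map X P = gaussianReal 0 v)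
    (hv : v ≠ 0) : ∫ ω, (X ω) ^ 2 ∂P ≤ v := by
  have hXi := X_sq_integrable hX hmap hv
  have key : ∀ c : ℝ, 0 < c → ∫ ω, (X ω) ^ 2 ∂P ≤ (v:ℝ) * Real.exp (c ^ 2 * v / 2) := by
    intro c hc
    have hu : (0:ℝ) ≤ c ^ 2 * v / 2 := by positivity
    have hmgfp := X_mgf hX hmap hv c
    have hmgfm := X_mgf hX hmap hv (-c)
    have hintp := X_mgf_integrable hX hmap hv c
    have hintm := X_mgf_integrable hX hmap hv (-c)
    have hQ : Integrable
        (fun ω => (Real.exp (c * X ω) + Real.exp (-c * X ω) - 2) / c ^ 2) P :=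
      ((hintp.add hintm).sub (integrable_const 2)).div_const _
    have hR : ∫ ω, (Real.exp (c * X ω) + Real.exp (-c * X ω) - 2) / c ^ 2 ∂P
        = (2 * Real.exp (c ^ 2 * v / 2) - 2) / c ^ 2 := by
      have hsum : Integrable (fun ω => Real.exp (c * X ω) + Real.exp (-c * X ω)) P :=
        hintp.add hintm
      rw [integral_div, integral_sub hsum (integrable_const 2),
        integral_add hintp hintm, integral_const, probReal_univ,
        smul_eq_mul, one_mul, hmgfp, hmgfm]
      norm_num
      ring
    have hle : ∀ ω, (X ω) ^ 2
        ≤ (Real.exp (c * X ω) + Real.exp (-c * X ω) - 2) / c ^ 2 := by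
      intro ω
      rw [le_div_iff₀ (by positivity : (0:ℝ) < c ^ 2)]
      have := sq_le_exp_add_exp (c * X ω)
      have hne : -(c * X ω) = -c * X ω := by ring
      rw [hne] at this
      nlinarith
    have hmono := integral_mono hXi hQ hle
    rw [hR] at hmono
    refine hmono.trans ?_
    rw [div_le_iff₀ (by positivity : (0:ℝ) < c ^ 2)]
    have hb : Real.exp (c ^ 2 * v / 2) - 1 ≤ c ^ 2 * v / 2 * Real.exp (c ^ 2 * v / 2) :=
      exp_sub_one_le hu
    nlinarith [Real.exp_pos (c ^ 2 * v / 2)]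
  have htd : Filter.Tendsto (fun c : ℝ => (v:ℝ) * Real.exp (c ^ 2 * v / 2))
      (nhdsWithin 0 (Set.Ioi 0)) (nhds (v:ℝ)) := by
    have hcont : Continuous (fun c : ℝ => (v:ℝ) * Real.exp (c ^ 2 * v / 2)) := by
      continuity
    have := tendsto_nhdsWithin_of_tendsto_nhds (s := Set.Ioi (0:ℝ)) (hcont.tendsto 0)
    simpa using this
  refine ge_of_tendsto htd ?_
  filter_upwards [self_mem_nhdsWithin] with c hc
  exact key c hc

end Map

section ExpAbs

variable {Ω : Type*} [MeasurableSpace Ω] {P : Measure Ω} [IsProbabilityMeasure P]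

lemma exp_abs_moment {m : Ω → ℝ} (hmmeas : Measurable m) {A : ℝ}
    (hint : ∀ c : ℝ, Integrable (fun ω => Real.exp (c * m ω)) P)
    (hb : ∀ c : ℝ, ∫ ω, Real.exp (c * m ω) ∂P ≤ Real.exp (|c| * A + c ^ 2 / 4))
    {q : ℝ} (hq : 0 < q) :
    Integrable (fun ω => Real.exp (q * |m ω|)) P ∧
    ∫ ω, Real.exp (q * |m ω|) ∂P ≤ 2 * Real.exp (q * A + q ^ 2 / 4) := by
  have hsum : Integrable (fun ω => Real.exp (q * m ω) + Real.exp (-q * m ω)) P :=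
    (hint q).add (hint (-q))
  have hptw : ∀ ω, Real.exp (q * |m ω|) ≤ Real.exp (q * m ω) + Real.exp (-q * m ω) := by
    intro ω
    have h1 : q * |m ω| = |q * m ω| := by rw [abs_mul, abs_of_pos hq]
    rw [h1]
    have h2 := exp_abs_le (q * m ω)
    have hne : -(q * m ω) = -q * m ω := by ring
    rwa [hne] at h2
  have hi : Integrable (fun ω => Real.exp (q * |m ω|)) P := by
    refine Integrable.mono' hsum ((hmmeas.abs.const_mul q).exp.aestronglyMeasurable)
      (Filter.Eventually.of_forall fun ω => ?_)
    rw [Real.norm_eq_abs, abs_of_pos (Real.exp_pos _)]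
    exact hptw ω
  refine ⟨hi, ?_⟩
  have hmono := integral_mono hi hsum hptw
  rw [integral_add (hint q) (hint (-q))] at hmono
  have h1 := hb q
  have h2 := hb (-q)
  have he : |(-q)| * A + (-q) ^ 2 / 4 = |q| * A + q ^ 2 / 4 := by rw [abs_neg]; ring
  rw [he] at h2
  rw [abs_of_pos hq] at h1 h2
  linarith

end ExpAbs

section Master

variable {Ω : Type*} [MeasurableSpace Ω] {P : Measure Ω} [IsProbabilityMeasure P]

set_option maxHeartbeats 1000000 in
lemma master (β : ℝ → Ω → ℝ)
    (hβmeas : ∀ t, Measurable (β t))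
    (hβgauss : ∀ s t : ℝ, 0 ≤ s → s ≤ t →
      Measure.map (fun ω => β t ω - β s ω) P = gaussianReal 0 (Real.toNNReal (t - s)))
    (hβindep : ∀ (n : ℕ) (u : ℕ → ℝ), Monotone u → 0 ≤ u 0 →
      iIndepFun
        (fun (i : Fin n) (ω : Ω) => β (u (i.1 + 1)) ω - β (u i.1) ω) P)
    (ε : ℝ) (hε : 0 < ε) (T : ℝ) (hT : 0 < T) (N : ℕ) (hN : 1 ≤ N)
    (c0 : ℝ) (mD : ℕ → Ω → ℝ)
    (h0 : ∀ ω, mD 0 ω = c0)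
    (hrec : ∀ (n : ℕ) ω, mD (n + 1) ω =
      (mD n ω + (β (((n : ℝ) + 1) * (T / N)) ω - β ((n : ℝ) * (T / N)) ω) / ε)
        / (1 + (T / N) / ε ^ 2)) :
    (∀ n : ℕ, Measurable (mD n)) ∧
    (∀ (n : ℕ) (c : ℝ), Integrable (fun ω => Real.exp (c * mD n ω)) P) ∧
    (∀ (n : ℕ) (c : ℝ),
      ∫ ω, Real.exp (c * mD n ω) ∂P ≤ Real.exp (|c| * |c0| + c ^ 2 / 4)) ∧
    (∀ n : ℕ, Integrable (fun ω => (mD n ω) ^ 2) P ∧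
      ∫ ω, (mD n ω) ^ 2 ∂P ≤ c0 ^ 2 + 1 / 2) := by
  have hNpos : (0:ℝ) < (N:ℝ) := by exact_mod_cast Nat.lt_of_lt_of_le Nat.zero_lt_one hN
  set Δ : ℝ := T / N with hΔdef
  have hΔ : 0 < Δ := div_pos hT hNpos
  set r : ℝ := Δ / ε ^ 2 with hrdef
  have hr : 0 < r := div_pos hΔ (by positivity)
  set a : ℝ := (1 + r)⁻¹ with hadef
  have h1r : (0:ℝ) < 1 + r := by linarith
  have hapos : 0 < a := inv_pos.mpr h1r
  have haa : a * (1 + r) = 1 := inv_mul_cancel₀ (ne_of_gt h1r)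
  have ha1 : a ≤ 1 := by nlinarith
  set Y : ℕ → Ω → ℝ := fun k ω => β (((k:ℝ) + 1) * Δ) ω - β ((k:ℝ) * Δ) ω with hYdef
  have hYmeas : ∀ k, Measurable (Y k) := fun k => (hβmeas _).sub (hβmeas _)
  set v : ℝ≥0 := Real.toNNReal Δ with hvdef
  have hv : v ≠ 0 := (Real.toNNReal_pos.mpr hΔ).ne'
  have hvr : ((v : ℝ≥0) : ℝ) = Δ := Real.coe_toNNReal _ hΔ.le
  have hYmap : ∀ k, Measure.map (Y k) P = gaussianReal 0 v := by
    intro k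
    have h := hβgauss ((k:ℝ) * Δ) (((k:ℝ) + 1) * Δ) (by positivity) (by nlinarith)
    have he : ((k:ℝ) + 1) * Δ - (k:ℝ) * Δ = Δ := by ring
    rw [he] at h
    exact h
  have hrec' : ∀ (n : ℕ) ω, mD (n + 1) ω = a * (mD n ω + Y n ω / ε) := by
    intro n ω
    rw [hrec n ω, div_eq_mul_inv, ← hadef, mul_comm]
  have hmDmeas : ∀ n, Measurable (mD n) := by
    intro n
    induction n with
    | zero =>
      have : mD 0 = fun _ => c0 := funext h0
      rw [this]; exact measurable_const
    | succ n ih =>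
      have : mD (n + 1) = fun ω => a * (mD n ω + Y n ω / ε) := funext (hrec' n)
      rw [this]
      exact ((ih.add ((hYmeas n).div_const ε)).const_mul a)
  have hclosed : ∀ (n : ℕ) ω,
      mD n ω = a ^ n * c0 + ∑ k ∈ Finset.range n, a ^ (n - k) * Y k ω / ε := by
    intro n
    induction n with
    | zero => intro ω; simpa using h0 ω
    | succ n ih =>
      intro ω
      rw [hrec' n ω, ih ω]
      have hsum : ∑ k ∈ Finset.range (n + 1), a ^ (n + 1 - k) * Y k ω / ε
          = a * ∑ k ∈ Finset.range n, a ^ (n - k) * Y k ω / ε + a * (Y n ω / ε) := by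
        rw [Finset.sum_range_succ, Finset.mul_sum]
        congr 1
        · apply Finset.sum_congr rfl
          intro k hk
          have hk' : k ≤ n := le_of_lt (Finset.mem_range.mp hk)
          rw [Nat.succ_sub hk', pow_succ]
          ring
        · rw [Nat.succ_sub (le_refl n), Nat.sub_self]
          show a ^ 1 * Y n ω / ε = a * (Y n ω / ε)
          rw [pow_one]
          ring
      rw [hsum, pow_succ]
      ring
  have hiid : ∀ n : ℕ, iIndepFun
      (fun (i : Fin n) => Y i.1) P := by
    intro n
    have hmono : Monotone (fun k : ℕ => (k:ℝ) * Δ) := by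
      intro x y hxy
      have : (x:ℝ) ≤ (y:ℝ) := Nat.cast_le.mpr hxy
      exact mul_le_mul_of_nonneg_right this hΔ.le
    have h := hβindep n (fun k => (k:ℝ) * Δ) hmono (by simp)
    have he : (fun (i : Fin n) (ω : Ω) => β (((i.1 + 1 : ℕ):ℝ) * Δ) ω - β (((i.1 : ℕ):ℝ) * Δ) ω)
        = fun (i : Fin n) => Y i.1 := by
      funext i ω
      simp only [hYdef]
      norm_num
    rw [he] at h
    exact h
  have hindep : ∀ n : ℕ, IndepFun (mD n) (Y n) P := by
    intro n
    classical
    set f : Fin (n + 1) → Ω → ℝ := fun j ω => (a ^ (n - j.1) / ε) * Y j.1 ω with hfdef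
    have hfmeas : ∀ j, Measurable (f j) := fun j => (hYmeas _).const_mul _
    have hfind : iIndepFun f P := by
      have := (hiid (n + 1)).comp (fun j x => (a ^ (n - j.1) / ε) * x)
        (fun j => measurable_const_mul _)
      exact this
    have hnot : Fin.last n ∉ Finset.image (Fin.castSucc) (Finset.univ : Finset (Fin n)) := by
      simp only [Finset.mem_image, Finset.mem_univ, true_and, not_exists]
      intro i
      exact ne_of_lt (Fin.castSucc_lt_last i)
    have hS := hfind.indepFun_finsetSum_of_notMem hfmeas hnot
    have hc := hS.comp (f := ∑ j ∈ Finset.image Fin.castSucc Finset.univ, f j)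
      (g := f (Fin.last n))
      (φ := fun x : ℝ => a ^ n * c0 + x) (ψ := fun x : ℝ => ε * x)
      (measurable_id.const_add _) (measurable_id.const_mul _)
    have h1 : (fun x : ℝ => a ^ n * c0 + x) ∘
        (∑ j ∈ Finset.image Fin.castSucc Finset.univ, f j) = mD n := by
      funext ω
      simp only [Function.comp_apply, Finset.sum_apply]
      rw [Finset.sum_image (fun x _ y _ h => Fin.castSucc_injective n h)]
      rw [hclosed n ω]
      congr 1
      rw [← Fin.sum_univ_eq_sum_range (fun k => a ^ (n - k) * Y k ω / ε)]
      apply Finset.sum_congr rfl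
      intro i _
      simp only [hfdef, Fin.coe_castSucc]
      ring
    have h2 : (fun x : ℝ => ε * x) ∘ f (Fin.last n) = Y n := by
      funext ω
      simp only [Function.comp_apply, hfdef, Fin.val_last, Nat.sub_self, pow_zero]
      field_simp
    rw [h1, h2] at hc
    exact hc
  -- moment generating function of mD n, by induction
  have Hmgf : ∀ n : ℕ, ∃ V : ℝ, 0 ≤ V ∧ V ≤ 1 / 2 ∧ ∀ c : ℝ,
      Integrable (fun ω => Real.exp (c * mD n ω)) P ∧
      ∫ ω, Real.exp (c * mD n ω) ∂P = Real.exp (c * a ^ n * c0 + c ^ 2 * V / 2) := by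
    intro n
    induction n with
    | zero =>
      refine ⟨0, le_refl 0, by norm_num, fun c => ?_⟩
      have hf : (fun ω => Real.exp (c * mD 0 ω)) = fun _ : Ω => Real.exp (c * c0) := by
        funext ω; rw [h0 ω]
      rw [hf]
      refine ⟨integrable_const _, ?_⟩
      rw [integral_const, probReal_univ, one_smul, pow_zero]
      norm_num
    | succ n ih =>
      obtain ⟨V, hV0, hVh, hVc⟩ := ih
      have hVle : a ^ 2 * (V + r) ≤ 1 / 2 := by
        have h2 : a ^ 2 * (1 + r) ^ 2 = 1 := by nlinarith [haa]
        nlinarith [sq_nonneg a, mul_pos hapos hapos, sq_nonneg r,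
          mul_nonneg (mul_nonneg hapos.le hapos.le) hr.le]
      refine ⟨a ^ 2 * (V + r), by positivity, hVle, fun c => ?_⟩
      have hEq : ∀ ω, c * mD (n + 1) ω = (c * a) * mD n ω + (c * a / ε) * Y n ω := by
        intro ω; rw [hrec' n ω]; field_simp
      have hfeq : (fun ω => Real.exp (c * mD (n + 1) ω))
          = fun ω => Real.exp ((c * a) * mD n ω) * Real.exp ((c * a / ε) * Y n ω) := by
        funext ω; rw [hEq ω, Real.exp_add]
      have hφ : Measurable fun x : ℝ => Real.exp (c * a * x) := by fun_prop
      have hψ : Measurable fun x : ℝ => Real.exp (c * a / ε * x) := by fun_prop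
      have hI : IndepFun (fun ω => Real.exp ((c * a) * mD n ω))
          (fun ω => Real.exp ((c * a / ε) * Y n ω)) P := (hindep n).comp hφ hψ
      have hint1 := (hVc (c * a)).1
      have hint2 := X_mgf_integrable (hYmeas n) (hYmap n) hv (c * a / ε)
      constructor
      · rw [hfeq]; exact hI.integrable_mul hint1 hint2
      · rw [hfeq]
        rw [hI.integral_fun_mul_eq_mul_integral hint1.aestronglyMeasurable hint2.aestronglyMeasurable]
        rw [(hVc (c * a)).2, X_mgf (hYmeas n) (hYmap n) hv (c * a / ε), ← Real.exp_add]
        congr 1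
        rw [hvr, hrdef]
        field_simp
        ring
  -- conclusion 1 & 2
  have key1 : ∀ (n : ℕ) (c : ℝ), Integrable (fun ω => Real.exp (c * mD n ω)) P :=
    fun n c => ((Hmgf n).choose_spec.2.2 c).1
  have key2 : ∀ (n : ℕ) (c : ℝ),
      ∫ ω, Real.exp (c * mD n ω) ∂P ≤ Real.exp (|c| * |c0| + c ^ 2 / 4) := by
    intro n c
    obtain ⟨V, hV0, hVh, hVc⟩ := Hmgf n
    rw [(hVc c).2]
    apply Real.exp_le_exp.mpr
    have han : 0 ≤ a ^ n := pow_nonneg hapos.le n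
    have han1 : a ^ n ≤ 1 := pow_le_one₀ hapos.le ha1
    have h1 : c * a ^ n * c0 ≤ |c| * |c0| := by
      calc c * a ^ n * c0 ≤ |c * a ^ n * c0| := le_abs_self _
      _ = |c| * a ^ n * |c0| := by rw [abs_mul, abs_mul, abs_of_nonneg han]
      _ ≤ |c| * 1 * |c0| := by
        apply mul_le_mul_of_nonneg_right _ (abs_nonneg c0)
        exact mul_le_mul_of_nonneg_left han1 (abs_nonneg c)
      _ = |c| * |c0| := by ring
    have h2 : c ^ 2 * V / 2 ≤ c ^ 2 / 4 := by nlinarith [sq_nonneg c]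
    linarith
  have Hsq : ∀ n : ℕ, Integrable (fun ω => (mD n ω) ^ 2) P ∧
      ∫ ω, (mD n ω) ^ 2 ∂P ≤ c0 ^ 2 + 1 / 2 := by
    intro n
    induction n with
    | zero =>
      have hf : (fun ω => (mD 0 ω) ^ 2) = fun _ : Ω => c0 ^ 2 := by
        funext ω; rw [h0 ω]
      rw [hf]
      refine ⟨integrable_const _, ?_⟩
      rw [integral_const, probReal_univ, one_smul]
      linarith
    | succ n ih =>
      obtain ⟨ih2, ih3⟩ := ih
      have ihint : Integrable (mD n) P := by
        refine Integrable.mono' ((key1 n 1).add (key1 n (-1)))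
          (hmDmeas n).aestronglyMeasurable (Filter.Eventually.of_forall fun ω => ?_)
        have := abs_le_exp_add_exp (mD n ω)
        simpa [Real.norm_eq_abs] using this
      have hY1 : Integrable (Y n) P := X_integrable (hYmeas n) (hYmap n) hv
      have hY2 : Integrable (fun ω => (Y n ω) ^ 2) P := X_sq_integrable (hYmeas n) (hYmap n) hv
      have hYmean : ∫ ω, Y n ω ∂P = 0 := X_mean (hYmeas n) (hYmap n) hv
      have hYsq : ∫ ω, (Y n ω) ^ 2 ∂P ≤ Δ := by
        have := X_sq_le (hYmeas n) (hYmap n) hv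
        rwa [hvr] at this
      have hmy : Integrable (fun ω => mD n ω * Y n ω) P :=
        (hindep n).integrable_mul ihint hY1
      have hmyint : ∫ ω, mD n ω * Y n ω ∂P = 0 := by
        rw [(hindep n).integral_fun_mul_eq_mul_integral ihint.aestronglyMeasurable hY1.aestronglyMeasurable,
          hYmean, mul_zero]
      have hptw : ∀ ω, (mD (n + 1) ω) ^ 2
          = a ^ 2 * (mD n ω) ^ 2 + (2 * a ^ 2 / ε) * (mD n ω * Y n ω)
            + (a ^ 2 / ε ^ 2) * (Y n ω) ^ 2 := by
        intro ω
        rw [hrec' n ω]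
        field_simp
        ring
      have hfeq : (fun ω => (mD (n + 1) ω) ^ 2)
          = fun ω => a ^ 2 * (mD n ω) ^ 2 + (2 * a ^ 2 / ε) * (mD n ω * Y n ω)
            + (a ^ 2 / ε ^ 2) * (Y n ω) ^ 2 := funext hptw
      have hi1 : Integrable (fun ω => a ^ 2 * (mD n ω) ^ 2) P := ih2.const_mul _
      have hi2 : Integrable (fun ω => (2 * a ^ 2 / ε) * (mD n ω * Y n ω)) P := hmy.const_mul _
      have hi3 : Integrable (fun ω => (a ^ 2 / ε ^ 2) * (Y n ω) ^ 2) P := hY2.const_mul _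
      constructor
      · rw [hfeq]; exact (hi1.add hi2).add hi3
      · rw [hfeq]
        have hi12 : Integrable (fun ω => a ^ 2 * (mD n ω) ^ 2
            + (2 * a ^ 2 / ε) * (mD n ω * Y n ω)) P := hi1.add hi2
        rw [integral_add hi12 hi3, integral_add hi1 hi2,
          integral_const_mul, integral_const_mul, integral_const_mul, hmyint, mul_zero, add_zero]
        have hb : a ^ 2 * ∫ ω, (mD n ω) ^ 2 ∂P ≤ a ^ 2 * (c0 ^ 2 + 1 / 2) :=
          mul_le_mul_of_nonneg_left ih3 (sq_nonneg a)
        have hb2 : a ^ 2 / ε ^ 2 * ∫ ω, (Y n ω) ^ 2 ∂P ≤ a ^ 2 / ε ^ 2 * Δ :=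
          mul_le_mul_of_nonneg_left hYsq (by positivity)
        have hfin : a ^ 2 * (c0 ^ 2 + 1 / 2) + a ^ 2 / ε ^ 2 * Δ ≤ c0 ^ 2 + 1 / 2 := by
          have hΔr : Δ = r * ε ^ 2 := by rw [hrdef]; field_simp
          have h2 : a ^ 2 * (1 + r) ^ 2 = 1 := by nlinarith [haa]
          have he2 : a ^ 2 / ε ^ 2 * Δ = a ^ 2 * r := by
            rw [hΔr]
            field_simp
          rw [he2]
          nlinarith [sq_nonneg c0, hr, mul_pos hapos hapos, sq_nonneg r,
            mul_nonneg (mul_nonneg (sq_nonneg c0) (mul_pos hapos hapos).le) hr.le,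
            mul_nonneg (mul_pos hapos hapos).le (sq_nonneg r),
            mul_nonneg (sq_nonneg c0) hr.le]
        linarith

  exact ⟨hmDmeas, key1, key2, Hsq⟩

end Master

end DOUaux

/-- **Lemma (uniform moment bounds for the discretized OU component).** For every `p ∈ [1,∞)`
the `L^p` norms of `m_n^{ε,Δt}` are bounded uniformly in `ε ∈ (0,ε₀)`, `Δt = T/N` and `n`;
similarly for the exponential moments; and for `p = 2` one has
`𝔼[|m_n^{ε,Δt}|²] ≤ sup_{ε'} |m₀^{ε'}|² + 1/2`. -/
theorem discrete_OU_moment_bounds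
    {Ω : Type*} [MeasurableSpace Ω] (P : Measure Ω) [IsProbabilityMeasure P]
    (β : ℝ → Ω → ℝ)
    (hβmeas : ∀ t, Measurable (β t))
    (hβ0 : ∀ ω, β 0 ω = 0)
    (hβcont : ∀ᵐ ω ∂P, Continuous fun t => β t ω)
    (hβgauss : ∀ s t : ℝ, 0 ≤ s → s ≤ t →
      Measure.map (fun ω => β t ω - β s ω) P = gaussianReal 0 (Real.toNNReal (t - s)))
    (hβindep : ∀ (n : ℕ) (u : ℕ → ℝ), Monotone u → 0 ≤ u 0 →
      iIndepFun
        (fun (i : Fin n) (ω : Ω) => β (u (i.1 + 1)) ω - β (u i.1) ω) P)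
    (ε₀ : ℝ) (hε₀ : 0 < ε₀)
    (m0 : ℝ → ℝ) (M0 : ℝ) (hm0 : ∀ ε ∈ Ioo (0:ℝ) ε₀, |m0 ε| ≤ M0) :
    (∀ p : ℝ, 1 ≤ p → ∃ M : ℝ,
      ∀ ε ∈ Ioo (0:ℝ) ε₀, ∀ T : ℝ, 0 < T → ∀ N : ℕ, 1 ≤ N →
      ∀ mD : ℕ → Ω → ℝ,
        (∀ ω, mD 0 ω = m0 ε) →
        (∀ (n : ℕ) ω, mD (n + 1) ω =
          (mD n ω + (β (((n : ℝ) + 1) * (T / N)) ω - β ((n : ℝ) * (T / N)) ω) / ε)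
            / (1 + (T / N) / ε ^ 2)) →
        ∀ n : ℕ, (∫ ω, |mD n ω| ^ p ∂P) ^ (1 / p) ≤ M) ∧
    (∀ q : ℝ, 0 < q → ∃ M : ℝ,
      ∀ ε ∈ Ioo (0:ℝ) ε₀, ∀ T : ℝ, 0 < T → ∀ N : ℕ, 1 ≤ N →
      ∀ mD : ℕ → Ω → ℝ,
        (∀ ω, mD 0 ω = m0 ε) →
        (∀ (n : ℕ) ω, mD (n + 1) ω =
          (mD n ω + (β (((n : ℝ) + 1) * (T / N)) ω - β ((n : ℝ) * (T / N)) ω) / ε)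
            / (1 + (T / N) / ε ^ 2)) →
        ∀ n : ℕ, ∫ ω, Real.exp (q * |mD n ω|) ∂P ≤ M) ∧
    (∀ ε ∈ Ioo (0:ℝ) ε₀, ∀ T : ℝ, 0 < T → ∀ N : ℕ, 1 ≤ N →
      ∀ mD : ℕ → Ω → ℝ,
        (∀ ω, mD 0 ω = m0 ε) →
        (∀ (n : ℕ) ω, mD (n + 1) ω =
          (mD n ω + (β (((n : ℝ) + 1) * (T / N)) ω - β ((n : ℝ) * (T / N)) ω) / ε)
            / (1 + (T / N) / ε ^ 2)) →
        ∀ n : ℕ, ∫ ω, |mD n ω| ^ (2 : ℝ) ∂P ≤ M0 ^ 2 + 1 / 2) := by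
  have hM0 : 0 ≤ M0 :=
    le_trans (abs_nonneg _) (hm0 (ε₀ / 2) ⟨half_pos hε₀, half_lt_self hε₀⟩)
  refine ⟨?_, ?_, ?_⟩
  · -- p-th moments
    intro p hp
    have hp0 : (0:ℝ) < p := lt_of_lt_of_le one_pos hp
    refine ⟨2 * Real.exp (p * M0 + p ^ 2 / 4), ?_⟩
    intro ε hε T hT N hN mD hmD0 hmDrec n
    obtain ⟨hmeas, hint, hbound, _⟩ :=
      DOUaux.master β hβmeas hβgauss hβindep ε hε.1 T hT N hN (m0 ε) mD hmD0 hmDrec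
    have hA : |m0 ε| ≤ M0 := hm0 ε hε
    obtain ⟨hiexp, hbexp⟩ :=
      DOUaux.exp_abs_moment (hmeas n) (fun c => hint n c) (fun c => hbound n c) hp0
    have hB : ∫ ω, Real.exp (p * |mD n ω|) ∂P ≤ 2 * Real.exp (p * M0 + p ^ 2 / 4) := by
      refine hbexp.trans ?_
      have : p * |m0 ε| + p ^ 2 / 4 ≤ p * M0 + p ^ 2 / 4 := by
        have := mul_le_mul_of_nonneg_left hA hp0.le
        linarith
      have := Real.exp_le_exp.mpr this
      linarith
    have hptw : ∀ ω, |mD n ω| ^ p ≤ Real.exp (p * |mD n ω|) := by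
      intro ω
      have h1 : |mD n ω| ≤ Real.exp |mD n ω| := by
        have := Real.add_one_le_exp |mD n ω|; linarith
      calc |mD n ω| ^ p ≤ (Real.exp |mD n ω|) ^ p :=
            Real.rpow_le_rpow (abs_nonneg _) h1 hp0.le
      _ = Real.exp (|mD n ω| * p) := (Real.exp_mul _ p).symm
      _ = Real.exp (p * |mD n ω|) := by rw [mul_comm]
    have hmono : ∫ ω, |mD n ω| ^ p ∂P ≤ 2 * Real.exp (p * M0 + p ^ 2 / 4) := by
      refine le_trans ?_ hB
      exact integral_mono_of_nonneg
        (Filter.Eventually.of_forall fun ω => Real.rpow_nonneg (abs_nonneg _) p)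
        hiexp (Filter.Eventually.of_forall hptw)
    have hB1 : (1:ℝ) ≤ 2 * Real.exp (p * M0 + p ^ 2 / 4) := by
      have h1 : (1:ℝ) ≤ Real.exp (p * M0 + p ^ 2 / 4) := by
        rw [← Real.exp_zero]
        exact Real.exp_le_exp.mpr (by positivity)
      linarith
    calc (∫ ω, |mD n ω| ^ p ∂P) ^ (1 / p)
        ≤ (2 * Real.exp (p * M0 + p ^ 2 / 4)) ^ (1 / p) :=
          Real.rpow_le_rpow
            (integral_nonneg fun ω => Real.rpow_nonneg (abs_nonneg _) p)
            hmono (by positivity)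
      _ ≤ (2 * Real.exp (p * M0 + p ^ 2 / 4)) ^ (1:ℝ) :=
          Real.rpow_le_rpow_of_exponent_le hB1
            (by rw [div_le_one hp0]; exact hp)
      _ = 2 * Real.exp (p * M0 + p ^ 2 / 4) := Real.rpow_one _
  · -- exponential moments
    intro q hq
    refine ⟨2 * Real.exp (q * M0 + q ^ 2 / 4), ?_⟩
    intro ε hε T hT N hN mD hmD0 hmDrec n
    obtain ⟨hmeas, hint, hbound, _⟩ :=
      DOUaux.master β hβmeas hβgauss hβindep ε hε.1 T hT N hN (m0 ε) mD hmD0 hmDrec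
    have hA : |m0 ε| ≤ M0 := hm0 ε hε
    obtain ⟨hiexp, hbexp⟩ :=
      DOUaux.exp_abs_moment (hmeas n) (fun c => hint n c) (fun c => hbound n c) hq
    refine hbexp.trans ?_
    have h1 : q * |m0 ε| + q ^ 2 / 4 ≤ q * M0 + q ^ 2 / 4 := by
      have := mul_le_mul_of_nonneg_left hA hq.le
      linarith
    have := Real.exp_le_exp.mpr h1
    linarith
  · -- second moments
    intro ε hε T hT N hN mD hmD0 hmDrec n
    obtain ⟨hmeas, hint, hbound, hsq⟩ :=
      DOUaux.master β hβmeas hβgauss hβindep ε hε.1 T hT N hN (m0 ε) mD hmD0 hmDrec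
    have hA : |m0 ε| ≤ M0 := hm0 ε hε
    have hfun : (fun ω => |mD n ω| ^ (2:ℝ)) = fun ω => (mD n ω) ^ 2 := by
      funext ω
      rw [show ((2:ℝ)) = ((2:ℕ):ℝ) by norm_num, Real.rpow_natCast, sq_abs]
    rw [hfun]
    refine (hsq n).2.trans ?_
    have : (m0 ε) ^ 2 ≤ M0 ^ 2 := by
      rw [← sq_abs]
      exact pow_le_pow_left₀ (abs_nonneg _) hA 2
    linarith
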